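/- For n = 1 and n = 2 and for every m ≥ 1, there exists a finite-dimensional representation V of B (n+1) over ℂ such that the restriction of V along the inclusion ι : B n →* B (n+1) is isomorphic, as a representation of B n, to the linearization ℂ[(ℤ/mℤ)^n]. -/

import Mathlib

/-! Common setup: the signed symmetric group `B n` as a semidirect product,
its action on `Fin n → ZMod m`, and the inclusion `B n →* B (n+1)`. -/

/-- The additive automorphism of sign vectors induced by a permutation:
`ε ↦ ε ∘ σ⁻¹`. -/
def signAddAut (n : ℕ) (σ : Equiv.Perm (Fin n)) :
    (Fin n → ZMod 2) ≃+ (Fin n → ZMod 2) :=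
  { Equiv.arrowCongr σ (Equiv.refl (ZMod 2)) with
    map_add' := fun _ _ => rfl }

/-- The action of permutations on sign vectors, as a homomorphism to the
automorphism group of `Multiplicative (Fin n → ZMod 2)`. -/
def bSignHom (n : ℕ) :
    Equiv.Perm (Fin n) →* MulAut (Multiplicative (Fin n → ZMod 2)) where
  toFun σ := AddEquiv.toMultiplicative (signAddAut n σ)
  map_one' := by ext ε; rfl
  map_mul' σ τ := by ext ε; rfl

/-- The signed symmetric group on `n` letters, modelled as the semidirect
product `(Fin n → ZMod 2) ⋊ Equiv.Perm (Fin n)`, where a permutation acts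
on sign vectors by `σ • ε = ε ∘ σ⁻¹`. -/
abbrev B (n : ℕ) :=
  Multiplicative (Fin n → ZMod 2) ⋊[bSignHom n] Equiv.Perm (Fin n)

lemma neg_one_pow_val_add {M : Type*} [Monoid M] [HasDistribNeg M] (a b : ZMod 2) :
    (-1 : M) ^ (a + b).val = (-1 : M) ^ a.val * (-1 : M) ^ b.val := by
  have key : ∀ a b : ZMod 2,
      (a + b).val = a.val + b.val ∨ ((a + b).val = 0 ∧ a.val = 1 ∧ b.val = 1) := by decide
  rcases key a b with h | ⟨h1, h2, h3⟩
  · rw [h, pow_add]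
  · rw [h1, h2, h3]; simp

/-- The action of `B n` on `Fin n → ZMod m`: permute coordinates and negate
the coordinates with sign `1`, i.e. `((ε,σ) • x) i = (-1)^(ε i).val * x (σ⁻¹ i)`. -/
instance BAct (n m : ℕ) : MulAction (B n) (Fin n → ZMod m) where
  smul g x := fun i =>
    (-1 : ZMod m) ^ (Multiplicative.toAdd g.left i).val * x (g.right⁻¹ i)
  one_smul x := by
    funext i
    show (-1 : ZMod m) ^ ((0 : ZMod 2)).val * x i = x i
    simp
  mul_smul g h x := by
    funext i
    show (-1 : ZMod m) ^ ((Multiplicative.toAdd g.left i)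
        + (Multiplicative.toAdd h.left (g.right⁻¹ i))).val
        * x (h.right⁻¹ (g.right⁻¹ i))
      = (-1 : ZMod m) ^ (Multiplicative.toAdd g.left i).val
        * ((-1 : ZMod m) ^ (Multiplicative.toAdd h.left (g.right⁻¹ i)).val
          * x (h.right⁻¹ (g.right⁻¹ i)))
    rw [neg_one_pow_val_add, mul_assoc]

lemma bact_smul_def {n m : ℕ} (g : B n) (x : Fin n → ZMod m) (i : Fin n) :
    (g • x) i = (-1 : ZMod m) ^ (Multiplicative.toAdd g.left i).val * x (g.right⁻¹ i) :=
  rfl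

/-- Extension of a permutation of `Fin n` to `Fin (n+1)`, fixing the last letter. -/
def extendPermEquiv {n : ℕ} (σ : Equiv.Perm (Fin n)) : Equiv.Perm (Fin (n + 1)) where
  toFun := Fin.snoc (fun i => Fin.castSucc (σ i)) (Fin.last n)
  invFun := Fin.snoc (fun i => Fin.castSucc (σ⁻¹ i)) (Fin.last n)
  left_inv j := by
    induction j using Fin.lastCases with
    | last => simp
    | cast i => simp
  right_inv j := by
    induction j using Fin.lastCases with
    | last => simp
    | cast i => simp

@[simp] lemma extendPermEquiv_castSucc {n : ℕ} (σ : Equiv.Perm (Fin n)) (i : Fin n) :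
    extendPermEquiv σ (Fin.castSucc i) = Fin.castSucc (σ i) := by
  simp [extendPermEquiv]

@[simp] lemma extendPermEquiv_last {n : ℕ} (σ : Equiv.Perm (Fin n)) :
    extendPermEquiv σ (Fin.last n) = Fin.last n := by
  simp [extendPermEquiv]

@[simp] lemma extendPermEquiv_inv {n : ℕ} (σ : Equiv.Perm (Fin n)) :
    (extendPermEquiv σ)⁻¹ = extendPermEquiv σ⁻¹ := by
  refine Equiv.ext fun j => ?_
  rw [Equiv.Perm.inv_def, Equiv.symm_apply_eq]
  induction j using Fin.lastCases with
  | last => simp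
  | cast i => simp

@[simp] lemma extendPermEquiv_symm_castSucc {n : ℕ} (σ : Equiv.Perm (Fin n)) (i : Fin n) :
    (extendPermEquiv σ).symm (Fin.castSucc i) = Fin.castSucc (σ.symm i) := by
  rw [Equiv.symm_apply_eq]
  simp [Equiv.Perm.inv_def]

@[simp] lemma extendPermEquiv_symm_last {n : ℕ} (σ : Equiv.Perm (Fin n)) :
    (extendPermEquiv σ).symm (Fin.last n) = Fin.last n := by
  rw [Equiv.symm_apply_eq]
  simp

/-- The embedding `Equiv.Perm (Fin n) →* Equiv.Perm (Fin (n+1))` extending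
a permutation by the identity on the last letter. -/
def extendPerm (n : ℕ) : Equiv.Perm (Fin n) →* Equiv.Perm (Fin (n + 1)) where
  toFun := extendPermEquiv
  map_one' := by
    ext j
    induction j using Fin.lastCases with
    | last => simp
    | cast i => simp
  map_mul' σ τ := by
    ext j
    induction j using Fin.lastCases with
    | last => simp
    | cast i => simp

/-- The inclusion `B n →* B (n+1)`: extend the sign vector by `0` in the last
coordinate and the permutation by the identity on the last letter. -/
def ιB (n : ℕ) : B n →* B (n + 1) where
  toFun g :=
    ⟨Multiplicative.ofAdd
      (Fin.snoc (Multiplicative.toAdd g.left) 0 : Fin (n + 1) → ZMod 2), extendPerm n g.right⟩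
  map_one' := by
    refine SemidirectProduct.ext ?_ ?_
    · show Multiplicative.ofAdd
          (Fin.snoc (0 : Fin n → ZMod 2) (0 : ZMod 2) : Fin (n + 1) → ZMod 2) = 1
      have h : (Fin.snoc (0 : Fin n → ZMod 2) (0 : ZMod 2) : Fin (n + 1) → ZMod 2) = 0 := by
        funext j
        induction j using Fin.lastCases with
        | last => simp
        | cast i => simp
      rw [h]; rfl
    · show extendPerm n 1 = 1
      exact map_one _
  map_mul' g h := by
    refine SemidirectProduct.ext ?_ ?_
    · show Multiplicative.ofAdd
          (Fin.snoc (Multiplicative.toAdd ((g * h).left)) 0 : Fin (n + 1) → ZMod 2) = _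
      have key : (Fin.snoc (Multiplicative.toAdd ((g * h).left)) 0 : Fin (n + 1) → ZMod 2)
          = (Fin.snoc (Multiplicative.toAdd g.left) 0 : Fin (n + 1) → ZMod 2)
            + (Fin.snoc (Multiplicative.toAdd h.left) 0 : Fin (n + 1) → ZMod 2)
              ∘ ⇑((extendPermEquiv g.right)⁻¹) := by
        funext j
        induction j using Fin.lastCases with
        | last => simp
        | cast i =>
          show (Fin.snoc (Multiplicative.toAdd g.left
              + (Multiplicative.toAdd h.left) ∘ ⇑(g.right⁻¹)) 0
              : Fin (n + 1) → ZMod 2) i.castSucc = _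
          simp [Equiv.Perm.inv_def]
      rw [key]; rfl
    · show extendPerm n (g * h).right = _
      exact map_mul (extendPerm n) g.right h.right

section NOne

variable (m : ℕ)

open Multiplicative

/-- Total-sign action of `B 2` on `Fin 1 → ZMod m`. -/
def totalSignAction : MulAction (B 2) (Fin 1 → ZMod m) where
  smul g x := fun i => (-1 : ZMod m) ^ ((toAdd g.left 0 + toAdd g.left 1).val) * x i
  one_smul x := by
    funext i
    show (-1 : ZMod m) ^ ((0 : ZMod 2) + 0).val * x i = x i
    simp
  mul_smul g h x := by
    funext i
    show (-1 : ZMod m) ^ ((toAdd (g * h).left 0 + toAdd (g * h).left 1).val) * x i = _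
    have hleft : toAdd (g * h).left = toAdd g.left + (toAdd h.left) ∘ ⇑(g.right⁻¹) := rfl
    have hperm : ∀ (σ : Equiv.Perm (Fin 2)) (b : Fin 2 → ZMod 2),
        b (σ⁻¹ 0) + b (σ⁻¹ 1) = b 0 + b 1 := by
      intro σ b
      have : σ⁻¹ 0 = 0 ∧ σ⁻¹ 1 = 1 ∨ σ⁻¹ 0 = 1 ∧ σ⁻¹ 1 = 0 := by
        revert σ; decide
      rcases this with ⟨h0, h1⟩ | ⟨h0, h1⟩ <;> rw [h0, h1]
      exact add_comm _ _
    show _ = (-1 : ZMod m) ^ ((toAdd g.left 0 + toAdd g.left 1).val) *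
        ((-1 : ZMod m) ^ ((toAdd h.left 0 + toAdd h.left 1).val) * x i)
    rw [hleft]
    simp only [Pi.add_apply, Function.comp_apply]
    rw [show toAdd g.left 0 + toAdd h.left (g.right⁻¹ 0) + (toAdd g.left 1 + toAdd h.left (g.right⁻¹ 1))
        = (toAdd g.left 0 + toAdd g.left 1) + (toAdd h.left (g.right⁻¹ 0) + toAdd h.left (g.right⁻¹ 1)) by ring]
    rw [hperm g.right (toAdd h.left), neg_one_pow_val_add, mul_assoc]

end NOne
open Multiplicative CategoryTheory in
lemma iota_smul_eq (m : ℕ) (g : B 1) (x : Fin 1 → ZMod m) :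
    (totalSignAction m).smul (ιB 1 g) x = g • x := by
  funext i
  have hi : i = 0 := Subsingleton.elim _ _
  subst hi
  show (-1 : ZMod m) ^ ((toAdd (ιB 1 g).left 0 + toAdd (ιB 1 g).left 1).val) * x 0
      = (-1 : ZMod m) ^ ((toAdd g.left 0).val) * x (g.right⁻¹ 0)
  have h0 : toAdd (ιB 1 g).left 0 = toAdd g.left 0 := by
    show (Fin.snoc (toAdd g.left) 0 : Fin 2 → ZMod 2) 0 = _
    exact Fin.snoc_castSucc _ _ 0
  have h1 : toAdd (ιB 1 g).left 1 = 0 := by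
    show (Fin.snoc (toAdd g.left) 0 : Fin 2 → ZMod 2) (Fin.last 1) = 0
    exact Fin.snoc_last _ _
  have h2 : g.right⁻¹ 0 = 0 := Subsingleton.elim _ _
  rw [h0, h1, h2, add_zero]

open CategoryTheory in
lemma nOneCase (m : ℕ) (hm : 1 ≤ m) :
    ∃ V : Rep ℂ (B 2), FiniteDimensional ℂ V.V ∧
      Nonempty (Rep.res (ιB 1) V
        ≅ Rep.ofMulAction ℂ (B 1) (Fin 1 → ZMod m)) := by
  haveI : NeZero m := ⟨by omega⟩
  letI := totalSignAction m
  refine ⟨Rep.ofMulAction ℂ (B 2) (Fin 1 → ZMod m), ?_, ?_⟩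
  · show FiniteDimensional ℂ (MonoidAlgebra ℂ (Fin 1 → ZMod m))
    infer_instance
  · refine ⟨Rep.mkIso (Representation.Equiv.mk (LinearEquiv.refl ℂ _) ?_)⟩
    intro g
    show (Representation.ofMulAction ℂ (B 2) (Fin 1 → ZMod m)) (ιB 1 g)
        = (Representation.ofMulAction ℂ (B 1) (Fin 1 → ZMod m)) g
    have hf : (fun x => (ιB 1 g) • x) = (fun x : Fin 1 → ZMod m => g • x) :=
      funext (iota_smul_eq m g)
    rw [Representation.ofMulAction_def, Representation.ofMulAction_def, hf]
set_option linter.unusedSectionVars false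

section NTwo

variable (m : ℕ) [NeZero m]

/-- Self-negative elements of `ZMod m`. -/
def FixT := {a : ZMod m // a = -a}

/-- Chosen positive representatives of the free `±`-pairs in `ZMod m`. -/
def KT := {a : ZMod m // a.val < (-a).val}

/-- The index type `FixT ⊕ KT × ZMod 2` decomposing `ZMod m` by sign. -/
def XT := FixT m ⊕ KT m × ZMod 2

attribute [reducible] XT

/-- Realization map `XT m → ZMod m`. -/
def emb : XT m → ZMod m
  | Sum.inl a => a.1
  | Sum.inr (k, s) => (-1 : ZMod m) ^ s.val * k.1

lemma zmod2_cases : ∀ t : ZMod 2, t = 0 ∨ t = 1 := by decide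

lemma emb_flip (k : KT m) (s : ZMod 2) :
    emb m (Sum.inr (k, s + 1)) = - emb m (Sum.inr (k, s)) := by
  rcases zmod2_cases s with h | h <;> subst h <;>
    simp [emb, ZMod.val_one, show ((1:ZMod 2)+1 : ZMod 2) = 0 from rfl, ZMod.val_zero]

lemma emb_fix_neg (a : FixT m) : - emb m (Sum.inl a) = emb m (Sum.inl a) :=
  a.2.symm

lemma emb_bijective : Function.Bijective (emb m) := by
  constructor
  · rintro (a | ⟨k, s⟩) (b | ⟨l, t⟩) h
    · simp only [emb] at h; exact congrArg Sum.inl (Subtype.ext h)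
    · exfalso
      rcases zmod2_cases t with ht | ht <;> subst ht <;>
        simp only [emb, ZMod.val_zero, ZMod.val_one, pow_zero, pow_one, one_mul,
          neg_one_mul] at h
      · have : l.1 = -l.1 := by rw [← h]; exact a.2
        exact absurd (congrArg ZMod.val this) (Nat.ne_of_lt l.2)
      · have h2 : -a.1 = l.1 := by rw [h, neg_neg]
        have : l.1 = -l.1 := by rw [← h2, neg_neg]; exact a.2.symm
        exact absurd (congrArg ZMod.val this) (Nat.ne_of_lt l.2)
    · exfalso
      rcases zmod2_cases s with hs | hs <;> subst hs <;>
        simp only [emb, ZMod.val_zero, ZMod.val_one, pow_zero, pow_one, one_mul,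
          neg_one_mul] at h
      · have : k.1 = -k.1 := by rw [h]; exact b.2
        exact absurd (congrArg ZMod.val this) (Nat.ne_of_lt k.2)
      · have h2 : k.1 = -b.1 := by rw [← h, neg_neg]
        have : k.1 = -k.1 := by rw [h2, neg_neg]; exact b.2.symm
        exact absurd (congrArg ZMod.val this) (Nat.ne_of_lt k.2)
    · rcases zmod2_cases s with hs | hs <;> rcases zmod2_cases t with ht | ht <;>
        subst hs <;> subst ht <;>
        simp only [emb, ZMod.val_zero, ZMod.val_one, pow_zero, pow_one, one_mul,
          neg_one_mul] at h
      · exact congrArg Sum.inr (Prod.ext (Subtype.ext h) rfl)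
      · exfalso
        have hk := k.2; have hl := l.2
        have h2 : -k.1 = l.1 := by rw [h, neg_neg]
        rw [← h2, neg_neg] at hl
        omega
      · exfalso
        have hk := k.2; have hl := l.2
        rw [← h, neg_neg] at hl
        omega
      · have : k.1 = l.1 := neg_injective h
        exact congrArg Sum.inr (Prod.ext (Subtype.ext this) rfl)
  · intro a
    by_cases h : a = -a
    · exact ⟨Sum.inl ⟨a, h⟩, rfl⟩
    · have hne : a.val ≠ (-a).val := fun hc => h (ZMod.val_injective m hc)
      rcases Nat.lt_or_ge a.val (-a).val with hlt | hge
      · refine ⟨Sum.inr (⟨a, hlt⟩, 0), ?_⟩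
        simp [emb]
      · have hlt : (-a).val < (- -a).val := by rw [neg_neg]; omega
        refine ⟨Sum.inr (⟨-a, hlt⟩, 1), ?_⟩
        simp [emb, ZMod.val_one]

/-- The equivalence `XT m ≃ ZMod m`. -/
noncomputable def θ : XT m ≃ ZMod m := Equiv.ofBijective _ (emb_bijective m)

lemma θ_symm_emb (u : XT m) : (θ m).symm (emb m u) = u :=
  (θ m).symm_apply_apply u

lemma emb_θ_symm (a : ZMod m) : emb m ((θ m).symm a) = a :=
  (θ m).apply_symm_apply a

end NTwo
section NTwoB

open Equiv Finsupp

variable (m : ℕ) [NeZero m]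

/-- Basis index type for the extended representation. -/
def YB := (FixT m × FixT m) ⊕ ((KT m × KT m) × (ZMod 2 × ZMod 2)) ⊕
  ((FixT m × KT m) × (Fin 3 ⊕ Unit))

attribute [reducible] YB

/-- A monomial operator: basis vector `b` goes to `c b • e_{mv b}`. -/
noncomputable def opOf (mv : YB m → YB m) (c : YB m → ℂ) :
    Module.End ℂ (YB m →₀ ℂ) :=
  Finsupp.lsum ℂ (fun b => c b • Finsupp.lsingle (mv b))

lemma opOf_single (mv : YB m → YB m) (c : YB m → ℂ) (b : YB m) (x : ℂ) :
    opOf m mv c (Finsupp.single b x) = c b • Finsupp.single (mv b) x := by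
  simp [opOf, Finsupp.lsum_single]

lemma opOf_mul (mv₁ mv₂ : YB m → YB m) (c₁ c₂ : YB m → ℂ) :
    opOf m mv₁ c₁ * opOf m mv₂ c₂
      = opOf m (fun b => mv₁ (mv₂ b)) (fun b => c₂ b * c₁ (mv₂ b)) := by
  refine Finsupp.lhom_ext fun b x => ?_
  show opOf m mv₁ c₁ (opOf m mv₂ c₂ (Finsupp.single b x)) = _
  rw [opOf_single, map_smul, opOf_single, opOf_single, smul_smul]

lemma opOf_id : opOf m id (fun _ => 1) = 1 := by
  refine Finsupp.lhom_ext fun b x => ?_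
  rw [opOf_single]
  simp

/-- Move of basis indices under a sign vector. -/
def epsMove (ε : Fin 3 → ZMod 2) : YB m → YB m
  | .inl p => .inl p
  | .inr (.inl ((x, y), (s, s'))) =>
      .inr (.inl ((x, y), (s + ε 0 + ε 2, s' + ε 1 + ε 2)))
  | .inr (.inr q) => .inr (.inr q)

/-- Sign of basis vectors under a sign vector. -/
def epsSign (ε : Fin 3 → ZMod 2) : YB m → ℂ
  | .inr (.inr (_, .inl j)) => (-1 : ℂ) ^ (ε j).val
  | _ => 1

/-- The sign part of the extended representation. -/
noncomputable def fEps : Multiplicative (Fin 3 → ZMod 2) →* Module.End ℂ (YB m →₀ ℂ) where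
  toFun ε := opOf m (epsMove m ε.toAdd) (epsSign m ε.toAdd)
  map_one' := by
    show opOf m (epsMove m (0 : Fin 3 → ZMod 2)) (epsSign m (0 : Fin 3 → ZMod 2)) = 1
    rw [show epsMove m 0 = id by
      funext b
      rcases b with p | (⟨⟨x, y⟩, ⟨s, s'⟩⟩ | q) <;> simp [epsMove]]
    rw [show epsSign m (0 : Fin 3 → ZMod 2) = fun _ => 1 by
      funext b
      rcases b with p | (⟨⟨x, y⟩, ⟨s, s'⟩⟩ | ⟨ck, j | u⟩) <;> simp [epsSign]]
    exact opOf_id m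
  map_mul' ε δ := by
    show opOf m (epsMove m (ε.toAdd + δ.toAdd)) (epsSign m (ε.toAdd + δ.toAdd))
        = opOf m (epsMove m ε.toAdd) (epsSign m ε.toAdd)
          * opOf m (epsMove m δ.toAdd) (epsSign m δ.toAdd)
    rw [opOf_mul]
    congr 1
    · funext b
      rcases b with p | (⟨⟨x, y⟩, ⟨s, s'⟩⟩ | q) <;> simp [epsMove] <;> constructor <;> ring
    · funext b
      rcases b with p | (⟨⟨x, y⟩, ⟨s, s'⟩⟩ | ⟨ck, j | u⟩) <;>
        simp [epsSign, epsMove, neg_one_pow_val_add, mul_comm]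

/-- Conditional swap by a unit sign. -/
def swS {α : Type*} (u : ℤˣ) (p : α × α) : α × α := if u = 1 then p else (p.2, p.1)

lemma swS_mul {α : Type*} (u v : ℤˣ) (p : α × α) :
    swS (u * v) p = swS u (swS v p) := by
  rcases Int.units_eq_one_or u with h | h <;> rcases Int.units_eq_one_or v with h' | h' <;>
    subst h <;> subst h' <;> simp [swS]

/-- Action of a permutation of `Fin 3` on the pair of `ZMod 2` signs
(the quotient `(ZMod 2)³/diagonal` in coordinates). -/
def aMap (σ : Equiv.Perm (Fin 3)) (s s' : ZMod 2) : ZMod 2 × ZMod 2 :=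
  (![s, s', 0] (σ⁻¹ 0) + ![s, s', 0] (σ⁻¹ 2), ![s, s', 0] (σ⁻¹ 1) + ![s, s', 0] (σ⁻¹ 2))

lemma aMap_one : ∀ s s' : ZMod 2, aMap 1 s s' = (s, s') := by decide

lemma aMap_mul : ∀ (σ τ : Equiv.Perm (Fin 3)) (s s' : ZMod 2),
    aMap (σ * τ) s s' = aMap σ (aMap τ s s').1 (aMap τ s s').2 := by decide

/-- Move of basis indices under a permutation. -/
def sigMove (σ : Equiv.Perm (Fin 3)) : YB m → YB m
  | .inl p => .inl (swS (Equiv.Perm.sign σ) p)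
  | .inr (.inl ((x, y), (s, s'))) =>
      .inr (.inl (swS (Equiv.Perm.sign σ) (x, y), aMap σ s s'))
  | .inr (.inr (ck, .inl j)) => .inr (.inr (ck, .inl (σ j)))
  | .inr (.inr (ck, .inr u)) => .inr (.inr (ck, .inr u))

/-- Sign of basis vectors under a permutation. -/
def sigSign (σ : Equiv.Perm (Fin 3)) : YB m → ℂ
  | .inr (.inr (_, .inr _)) => ((Equiv.Perm.sign σ : ℤˣ) : ℤ)
  | _ => 1

/-- The permutation part of the extended representation. -/
noncomputable def fSig : Equiv.Perm (Fin 3) →* Module.End ℂ (YB m →₀ ℂ) where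
  toFun σ := opOf m (sigMove m σ) (sigSign m σ)
  map_one' := by
    show opOf m (sigMove m 1) (sigSign m 1) = 1
    rw [show sigMove m 1 = id by
      funext b
      rcases b with p | (⟨⟨x, y⟩, ⟨s, s'⟩⟩ | ⟨ck, j | u⟩) <;>
        simp [sigMove, swS, aMap_one]]
    rw [show sigSign m 1 = fun _ => 1 by
      funext b
      rcases b with p | (⟨⟨x, y⟩, ⟨s, s'⟩⟩ | ⟨ck, j | u⟩) <;> simp [sigSign]]
    exact opOf_id m
  map_mul' σ τ := by
    show opOf m (sigMove m (σ * τ)) (sigSign m (σ * τ))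
        = opOf m (sigMove m σ) (sigSign m σ) * opOf m (sigMove m τ) (sigSign m τ)
    rw [opOf_mul]
    congr 1
    · funext b
      rcases b with p | (⟨⟨x, y⟩, ⟨s, s'⟩⟩ | ⟨ck, j | u⟩) <;>
        simp [sigMove, map_mul, swS_mul, aMap_mul, Equiv.Perm.mul_apply]
    · funext b
      rcases b with p | (⟨⟨x, y⟩, ⟨s, s'⟩⟩ | ⟨ck, j | u⟩) <;>
        simp [sigSign, sigMove, map_mul, mul_comm]

end NTwoB
section NTwoC

open Equiv Finsupp

variable (m : ℕ) [NeZero m]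

lemma bSign_toAdd (σ : Equiv.Perm (Fin 3)) (ε : Multiplicative (Fin 3 → ZMod 2)) :
    (Multiplicative.toAdd ((bSignHom 3 σ) ε)) = Multiplicative.toAdd ε ∘ ⇑σ⁻¹ := rfl

lemma aMap_eps : ∀ σ : Equiv.Perm (Fin 3), ∀ ε : Fin 3 → ZMod 2, ∀ s s' : ZMod 2,
    ((aMap σ s s').1 + (ε ∘ ⇑σ⁻¹) 0 + (ε ∘ ⇑σ⁻¹) 2,
      (aMap σ s s').2 + (ε ∘ ⇑σ⁻¹) 1 + (ε ∘ ⇑σ⁻¹) 2)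
      = aMap σ (s + ε 0 + ε 2) (s' + ε 1 + ε 2) := by decide

lemma key_commute (σ : Equiv.Perm (Fin 3)) (ε : Multiplicative (Fin 3 → ZMod 2)) :
    fEps m ((bSignHom 3 σ) ε) * fSig m σ = fSig m σ * fEps m ε := by
  show opOf m (epsMove m (Multiplicative.toAdd ((bSignHom 3 σ) ε)))
        (epsSign m (Multiplicative.toAdd ((bSignHom 3 σ) ε))) * opOf m (sigMove m σ) (sigSign m σ)
      = opOf m (sigMove m σ) (sigSign m σ) * opOf m (epsMove m (Multiplicative.toAdd ε))
        (epsSign m (Multiplicative.toAdd ε))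
  rw [opOf_mul, opOf_mul, bSign_toAdd]
  set ε' := Multiplicative.toAdd ε with hε
  congr 1
  · funext b
    rcases b with p | (⟨⟨x, y⟩, ⟨s, s'⟩⟩ | ⟨ck, j | u⟩) <;>
      simp only [epsMove, sigMove]
    exact congrArg (fun z => (Sum.inr (Sum.inl (swS (Equiv.Perm.sign σ) (x, y), z)) : YB m))
      (aMap_eps σ ε' s s')
  · funext b
    rcases b with p | (⟨⟨x, y⟩, ⟨s, s'⟩⟩ | ⟨ck, j | u⟩) <;>
      simp [epsSign, sigSign, epsMove, sigMove, Equiv.Perm.inv_def, mul_comm]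

noncomputable def fEpsU : Multiplicative (Fin 3 → ZMod 2) →* (Module.End ℂ (YB m →₀ ℂ))ˣ :=
  (fEps m).toHomUnits

noncomputable def fSigU : Equiv.Perm (Fin 3) →* (Module.End ℂ (YB m →₀ ℂ))ˣ :=
  (fSig m).toHomUnits

lemma compat : ∀ σ : Equiv.Perm (Fin 3),
    (fEpsU m).comp (MulEquiv.toMonoidHom (bSignHom 3 σ))
      = (MulEquiv.toMonoidHom (MulAut.conj ((fSigU m) σ))).comp (fEpsU m) := by
  intro σ
  refine MonoidHom.ext fun ε => ?_
  apply Units.ext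
  show (((fEpsU m) ((bSignHom 3 σ) ε) : (Module.End ℂ (YB m →₀ ℂ))ˣ) : Module.End ℂ (YB m →₀ ℂ))
      = ((MulAut.conj ((fSigU m) σ)) ((fEpsU m) ε) : (Module.End ℂ (YB m →₀ ℂ))ˣ)
  rw [MulAut.conj_apply]
  have hinv : ((fSigU m) σ)⁻¹ = (fSigU m) σ⁻¹ := by rw [← map_inv]
  rw [hinv]
  show fEps m ((bSignHom 3 σ) ε) = fSig m σ * fEps m ε * fSig m σ⁻¹
  have h := key_commute m σ ε
  have h2 : fSig m σ * fSig m σ⁻¹ = 1 := by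
    rw [← map_mul, mul_inv_cancel, map_one]
  calc fEps m ((bSignHom 3 σ) ε)
      = fEps m ((bSignHom 3 σ) ε) * (fSig m σ * fSig m σ⁻¹) := by rw [h2, mul_one]
    _ = (fEps m ((bSignHom 3 σ) ε) * fSig m σ) * fSig m σ⁻¹ := by rw [mul_assoc]
    _ = (fSig m σ * fEps m ε) * fSig m σ⁻¹ := by rw [h]
    _ = fSig m σ * fEps m ε * fSig m σ⁻¹ := rfl

/-- The representation of `B 3` on `(YB m) →₀ ℂ`. -/
noncomputable def ρ3 : Representation ℂ (B 3) (YB m →₀ ℂ) :=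
  (Units.coeHom (Module.End ℂ (YB m →₀ ℂ))).comp
    (SemidirectProduct.lift (fEpsU m) (fSigU m) (compat m))

lemma ρ3_apply (g : B 3) : ρ3 m g = fEps m g.left * fSig m g.right := by
  show ((SemidirectProduct.lift (fEpsU m) (fSigU m) (compat m)) g : Module.End ℂ (YB m →₀ ℂ)) = _
  conv_lhs => rw [← SemidirectProduct.inl_left_mul_inr_right g]
  rw [map_mul, SemidirectProduct.lift_inl, SemidirectProduct.lift_inr]
  rfl

end NTwoC
section NTwoD

open Equiv Finsupp

variable (m : ℕ) [NeZero m]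

/-- Pair of elements of `ZMod m` as a point of `(ZMod m)^2`. -/
def pt (a b : ZMod m) : Fin 2 → ZMod m := ![a, b]

@[simp] lemma pt_zero (a b : ZMod m) : pt m a b 0 = a := rfl
@[simp] lemma pt_one (a b : ZMod m) : pt m a b 1 = b := rfl

lemma pt_eta (x : Fin 2 → ZMod m) : pt m (x 0) (x 1) = x := by
  funext i; fin_cases i <;> rfl

/-- Axis point with free first coordinate. -/
def Pax (c : FixT m) (k : KT m) (s : ZMod 2) : Fin 2 → ZMod m :=
  pt m (emb m (Sum.inr (k, s))) (emb m (Sum.inl c))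

/-- Axis point with free second coordinate. -/
def Qax (c : FixT m) (k : KT m) (s : ZMod 2) : Fin 2 → ZMod m :=
  pt m (emb m (Sum.inl c)) (emb m (Sum.inr (k, s)))

/-- Basis elements of the axis block. -/
def bF (c : FixT m) (k : KT m) (j : Fin 3) : YB m := Sum.inr (Sum.inr ((c, k), Sum.inl j))
def bZ (c : FixT m) (k : KT m) : YB m := Sum.inr (Sum.inr ((c, k), Sum.inr ()))

noncomputable def vec : YB m → ((Fin 2 → ZMod m) →₀ ℂ)
  | .inl (c, d) => single (pt m (emb m (Sum.inl c)) (emb m (Sum.inl d))) 1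
  | .inr (.inl ((u, v), (s, s'))) =>
      single (pt m (emb m (Sum.inr (u, s))) (emb m (Sum.inr (v, s')))) 1
  | .inr (.inr ((c, k), .inl j)) =>
      if j = 0 then single (Pax m c k 0) 1 - single (Pax m c k 1) 1
      else if j = 1 then single (Qax m c k 0) 1 - single (Qax m c k 1) 1
      else (2⁻¹ : ℂ) • (single (Pax m c k 0) 1 + single (Pax m c k 1) 1
        + single (Qax m c k 0) 1 + single (Qax m c k 1) 1)
  | .inr (.inr ((c, k), .inr _)) =>
      (2⁻¹ : ℂ) • (single (Pax m c k 0) 1 + single (Pax m c k 1) 1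
        - single (Qax m c k 0) 1 - single (Qax m c k 1) 1)

noncomputable def wec0 : XT m → XT m → (YB m →₀ ℂ)
  | .inl c, .inl d => single (Sum.inl (c, d)) 1
  | .inr (k, s), .inr (l, s') => single (Sum.inr (Sum.inl ((k, l), (s, s')))) 1
  | .inr (k, s), .inl c =>
      (2⁻¹ : ℂ) • (((-1 : ℂ) ^ s.val) • single (bF m c k 0) 1
        + single (bF m c k 2) 1 + single (bZ m c k) 1)
  | .inl c, .inr (k, s) =>
      (2⁻¹ : ℂ) • (((-1 : ℂ) ^ s.val) • single (bF m c k 1) 1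
        + single (bF m c k 2) 1 - single (bZ m c k) 1)

noncomputable def wec (x : Fin 2 → ZMod m) : YB m →₀ ℂ :=
  wec0 m ((θ m).symm (x 0)) ((θ m).symm (x 1))


lemma fin3_cases {P : Fin 3 → Prop} (h0 : P 0) (h1 : P 1) (h2 : P 2) : ∀ j, P j := by
  intro j
  fin_cases j
  · exact h0
  · exact h1
  · exact h2

lemma vec_bF0 (c : FixT m) (k : KT m) :
    vec m (bF m c k 0) = single (Pax m c k 0) 1 - single (Pax m c k 1) 1 := rfl

lemma vec_bF1 (c : FixT m) (k : KT m) :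
    vec m (bF m c k 1) = single (Qax m c k 0) 1 - single (Qax m c k 1) 1 := rfl

lemma vec_bF2 (c : FixT m) (k : KT m) :
    vec m (bF m c k 2) = (2⁻¹ : ℂ) • (single (Pax m c k 0) 1 + single (Pax m c k 1) 1
      + single (Qax m c k 0) 1 + single (Qax m c k 1) 1) := rfl

lemma vec_bZ (c : FixT m) (k : KT m) :
    vec m (bZ m c k) = (2⁻¹ : ℂ) • (single (Pax m c k 0) 1 + single (Pax m c k 1) 1
      - single (Qax m c k 0) 1 - single (Qax m c k 1) 1) := rfl

/-- The intertwiner. -/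
noncomputable def Φ : (YB m →₀ ℂ) →ₗ[ℂ] ((Fin 2 → ZMod m) →₀ ℂ) :=
  Finsupp.lsum ℂ (fun b => LinearMap.toSpanSingleton ℂ _ (vec m b))

noncomputable def Ψ : ((Fin 2 → ZMod m) →₀ ℂ) →ₗ[ℂ] (YB m →₀ ℂ) :=
  Finsupp.lsum ℂ (fun x => LinearMap.toSpanSingleton ℂ _ (wec m x))

lemma Φ_single (b : YB m) (x : ℂ) : Φ m (single b x) = x • vec m b := by
  simp [Φ, Finsupp.lsum_single, LinearMap.toSpanSingleton_apply]

lemma Ψ_single (p : Fin 2 → ZMod m) (x : ℂ) : Ψ m (single p x) = x • wec m p := by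
  simp [Ψ, Finsupp.lsum_single, LinearMap.toSpanSingleton_apply]

lemma wec_pt (u v : XT m) : wec m (pt m (emb m u) (emb m v)) = wec0 m u v := by
  rw [wec, pt_zero, pt_one, θ_symm_emb, θ_symm_emb]

lemma wec_Pax (c : FixT m) (k : KT m) (s : ZMod 2) :
    wec m (Pax m c k s) = (2⁻¹ : ℂ) • (((-1 : ℂ) ^ s.val) • single (bF m c k 0) 1
      + single (bF m c k 2) 1 + single (bZ m c k) 1) := by
  rw [Pax, wec_pt]; rfl

lemma wec_Qax (c : FixT m) (k : KT m) (s : ZMod 2) :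
    wec m (Qax m c k s) = (2⁻¹ : ℂ) • (((-1 : ℂ) ^ s.val) • single (bF m c k 1) 1
      + single (bF m c k 2) 1 - single (bZ m c k) 1) := by
  rw [Qax, wec_pt]; rfl

lemma ΨΦ : (Ψ m) ∘ₗ (Φ m) = LinearMap.id := by
  refine Finsupp.lhom_ext fun b x => ?_
  show Ψ m (Φ m (single b x)) = single b x
  rw [Φ_single, map_smul, show (single b x : YB m →₀ ℂ) = x • single b 1 by simp]
  rcases b with ⟨c, d⟩ | (⟨⟨u, v⟩, ⟨s, s'⟩⟩ | ⟨⟨c, k⟩, j | w⟩)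
  · rw [show vec m (Sum.inl (c, d)) = single (pt m (emb m (Sum.inl c)) (emb m (Sum.inl d))) 1
        from rfl]
    rw [Ψ_single, wec_pt]
    rw [show wec0 m (Sum.inl c) (Sum.inl d) = single (Sum.inl (c, d) : YB m) 1 from rfl]
    simp
  · rw [show vec m (Sum.inr (Sum.inl ((u, v), (s, s'))))
        = single (pt m (emb m (Sum.inr (u, s))) (emb m (Sum.inr (v, s')))) 1 from rfl]
    rw [Ψ_single, wec_pt]
    rw [show wec0 m (Sum.inr (u, s)) (Sum.inr (v, s'))
        = single (Sum.inr (Sum.inl ((u, v), (s, s'))) : YB m) 1 from rfl]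
    simp
  · revert j
    refine fin3_cases ?_ ?_ ?_
    · rw [show (Sum.inr (Sum.inr ((c, k), Sum.inl 0)) : YB m) = bF m c k 0 from rfl,
        vec_bF0, map_sub, Ψ_single, Ψ_single, wec_Pax, wec_Pax]
      rw [show ((0 : ZMod 2)).val = 0 from rfl, show ((1 : ZMod 2)).val = 1 from rfl]
      match_scalars <;> ring
    · rw [show (Sum.inr (Sum.inr ((c, k), Sum.inl 1)) : YB m) = bF m c k 1 from rfl,
        vec_bF1, map_sub, Ψ_single, Ψ_single, wec_Qax, wec_Qax]
      rw [show ((0 : ZMod 2)).val = 0 from rfl, show ((1 : ZMod 2)).val = 1 from rfl]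
      match_scalars <;> ring
    · rw [show (Sum.inr (Sum.inr ((c, k), Sum.inl 2)) : YB m) = bF m c k 2 from rfl,
        vec_bF2, map_smul, map_add, map_add, map_add, Ψ_single, Ψ_single, Ψ_single, Ψ_single,
        wec_Pax, wec_Pax, wec_Qax, wec_Qax]
      rw [show ((0 : ZMod 2)).val = 0 from rfl, show ((1 : ZMod 2)).val = 1 from rfl]
      match_scalars <;> ring
  · rw [show (Sum.inr (Sum.inr ((c, k), Sum.inr w)) : YB m) = bZ m c k from rfl,
      vec_bZ, map_smul, map_sub, map_sub, map_add, Ψ_single, Ψ_single, Ψ_single, Ψ_single,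
      wec_Pax, wec_Pax, wec_Qax, wec_Qax]
    rw [show ((0 : ZMod 2)).val = 0 from rfl, show ((1 : ZMod 2)).val = 1 from rfl]
    match_scalars <;> ring

lemma ΦΨ : (Φ m) ∘ₗ (Ψ m) = LinearMap.id := by
  refine Finsupp.lhom_ext fun p x => ?_
  show Φ m (Ψ m (single p x)) = single p x
  rw [show (single p x : (Fin 2 → ZMod m) →₀ ℂ) = x • single p 1 by simp]
  simp only [map_smul]
  rw [Ψ_single]
  simp only [one_smul]
  rw [wec]
  have h0 : emb m ((θ m).symm (p 0)) = p 0 := emb_θ_symm m (p 0)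
  have h1 : emb m ((θ m).symm (p 1)) = p 1 := emb_θ_symm m (p 1)
  have hp : pt m (emb m ((θ m).symm (p 0))) (emb m ((θ m).symm (p 1))) = p := by
    rw [h0, h1]; exact pt_eta m p
  rcases hu : (θ m).symm (p 0) with c | ⟨k, s⟩ <;> rcases hv : (θ m).symm (p 1) with d | ⟨l, s'⟩
  · rw [show wec0 m (Sum.inl c) (Sum.inl d) = single (Sum.inl (c, d) : YB m) 1 from rfl]
    rw [Φ_single]
    rw [show vec m (Sum.inl (c, d))
        = single (pt m (emb m (Sum.inl c)) (emb m (Sum.inl d))) 1 from rfl]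
    rw [← hu, ← hv, hp]
    simp
  · rw [show wec0 m (Sum.inl c) (Sum.inr (l, s'))
        = (2⁻¹ : ℂ) • (((-1 : ℂ) ^ s'.val) • single (bF m c l 1) 1
          + single (bF m c l 2) 1 - single (bZ m c l) 1) from rfl]
    have hP : p = Qax m c l s' := by rw [Qax, ← hu, ← hv, hp]
    simp only [map_smul, map_sub, map_add]
    rw [Φ_single, Φ_single, Φ_single]
    simp only [one_smul]
    rw [vec_bF1, vec_bF2, vec_bZ, hP]
    rcases zmod2_cases s' with hs | hs <;> subst hs <;>
      simp only [show ((0 : ZMod 2)).val = 0 from rfl, show ((1 : ZMod 2)).val = 1 from rfl,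
        pow_zero, pow_one] <;>
      match_scalars <;> ring
  · rw [show wec0 m (Sum.inr (k, s)) (Sum.inl d)
        = (2⁻¹ : ℂ) • (((-1 : ℂ) ^ s.val) • single (bF m d k 0) 1
          + single (bF m d k 2) 1 + single (bZ m d k) 1) from rfl]
    have hP : p = Pax m d k s := by rw [Pax, ← hu, ← hv, hp]
    simp only [map_smul, map_sub, map_add]
    rw [Φ_single, Φ_single, Φ_single]
    simp only [one_smul]
    rw [vec_bF0, vec_bF2, vec_bZ, hP]
    rcases zmod2_cases s with hs | hs <;> subst hs <;>
      simp only [show ((0 : ZMod 2)).val = 0 from rfl, show ((1 : ZMod 2)).val = 1 from rfl,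
        pow_zero, pow_one] <;>
      match_scalars <;> ring
  · rw [show wec0 m (Sum.inr (k, s)) (Sum.inr (l, s'))
        = single (Sum.inr (Sum.inl ((k, l), (s, s'))) : YB m) 1 from rfl]
    rw [Φ_single]
    rw [show vec m (Sum.inr (Sum.inl ((k, l), (s, s'))))
        = single (pt m (emb m (Sum.inr (k, s))) (emb m (Sum.inr (l, s')))) 1 from rfl]
    rw [← hu, ← hv, hp]
    simp

end NTwoD
section NTwoE

open Equiv Finsupp Multiplicative

variable (m : ℕ) [NeZero m]

/-- The permutation representation of `B 2` on `(Fin 2 → ZMod m) →₀ ℂ`. -/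
noncomputable def RF : Representation ℂ (B 2) ((Fin 2 → ZMod m) →₀ ℂ) where
  toFun g := Finsupp.lmapDomain ℂ ℂ (fun x => g • x)
  map_one' := by ext; simp
  map_mul' x y := by ext; simp [mul_smul]

lemma RF_single {m : ℕ} [NeZero m] (g : B 2) (x : Fin 2 → ZMod m) (r : ℂ) :
    RF m g (single x r) = single (g • x) r := by
  simp [RF]

lemma negpow_fix (c : FixT m) (t : ZMod 2) :
    (-1 : ZMod m) ^ t.val * emb m (Sum.inl c) = emb m (Sum.inl c) := by
  rcases zmod2_cases t with h | h <;> subst h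
  · rw [show ((0 : ZMod 2)).val = 0 from rfl, pow_zero, one_mul]
  · rw [show ((1 : ZMod 2)).val = 1 from rfl, pow_one, neg_one_mul, emb_fix_neg]

lemma negpow_free (k : KT m) (s t : ZMod 2) :
    (-1 : ZMod m) ^ t.val * emb m (Sum.inr (k, s)) = emb m (Sum.inr (k, s + t)) := by
  rcases zmod2_cases t with h | h <;> subst h
  · rw [show ((0 : ZMod 2)).val = 0 from rfl, pow_zero, one_mul, add_zero]
  · rw [show ((1 : ZMod 2)).val = 1 from rfl, pow_one, neg_one_mul, emb_flip]

lemma inl_smul_pt (δ : Multiplicative (Fin 2 → ZMod 2)) (a b : ZMod m) :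
    (SemidirectProduct.inl δ : B 2) • (pt m a b)
      = pt m ((-1 : ZMod m) ^ (Multiplicative.toAdd δ 0).val * a)
          ((-1 : ZMod m) ^ (Multiplicative.toAdd δ 1).val * b) := by
  funext i
  rw [bact_smul_def]
  fin_cases i <;> rfl

lemma inr_swap_smul_pt (a b : ZMod m) :
    (SemidirectProduct.inr (Equiv.swap 0 1) : B 2) • (pt m a b) = pt m b a := by
  funext i
  rw [bact_smul_def]
  rw [show (Multiplicative.toAdd (SemidirectProduct.inr (Equiv.swap 0 1) : B 2).left)
      = (0 : Fin 2 → ZMod 2) from rfl]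
  rw [show ((SemidirectProduct.inr (Equiv.swap 0 1) : B 2).right)⁻¹ = Equiv.swap 0 1 by
    rw [SemidirectProduct.right_inr]; exact Equiv.swap_inv 0 1]
  fin_cases i <;>
    simp [pt, Equiv.swap_apply_left, Equiv.swap_apply_right]

lemma inl_smul_Pax (δ : Multiplicative (Fin 2 → ZMod 2)) (c : FixT m) (k : KT m) (s : ZMod 2) :
    (SemidirectProduct.inl δ : B 2) • Pax m c k s = Pax m c k (s + Multiplicative.toAdd δ 0) := by
  rw [Pax, inl_smul_pt, negpow_free, negpow_fix]; rfl

lemma inl_smul_Qax (δ : Multiplicative (Fin 2 → ZMod 2)) (c : FixT m) (k : KT m) (s : ZMod 2) :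
    (SemidirectProduct.inl δ : B 2) • Qax m c k s = Qax m c k (s + Multiplicative.toAdd δ 1) := by
  rw [Qax, inl_smul_pt, negpow_free, negpow_fix]; rfl

lemma swap_smul_Pax (c : FixT m) (k : KT m) (s : ZMod 2) :
    (SemidirectProduct.inr (Equiv.swap 0 1) : B 2) • Pax m c k s = Qax m c k s := by
  rw [Pax, inr_swap_smul_pt]; rfl

lemma swap_smul_Qax (c : FixT m) (k : KT m) (s : ZMod 2) :
    (SemidirectProduct.inr (Equiv.swap 0 1) : B 2) • Qax m c k s = Pax m c k s := by
  rw [Qax, inr_swap_smul_pt]; rfl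

lemma iota_inl (δ : Multiplicative (Fin 2 → ZMod 2)) :
    ιB 2 (SemidirectProduct.inl δ)
      = SemidirectProduct.inl (Multiplicative.ofAdd
          (Fin.snoc (Multiplicative.toAdd δ) 0 : Fin 3 → ZMod 2)) := by
  refine SemidirectProduct.ext ?_ ?_
  · rfl
  · show extendPerm 2 1 = 1
    exact map_one _

lemma snoc_zero_fun : (Fin.snoc (Multiplicative.toAdd (1 : Multiplicative (Fin 2 → ZMod 2))) 0
    : Fin 3 → ZMod 2) = 0 := by
  funext j
  induction j using Fin.lastCases with
  | last => rfl
  | cast i => simp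

lemma iota_inr (π : Equiv.Perm (Fin 2)) :
    ιB 2 (SemidirectProduct.inr π) = SemidirectProduct.inr (extendPerm 2 π) := by
  refine SemidirectProduct.ext ?_ ?_
  · show Multiplicative.ofAdd (Fin.snoc (Multiplicative.toAdd
        (1 : Multiplicative (Fin 2 → ZMod 2))) 0 : Fin 3 → ZMod 2) = 1
    rw [snoc_zero_fun]; rfl
  · rfl

lemma ρ3_inl (ε : Multiplicative (Fin 3 → ZMod 2)) :
    ρ3 m (SemidirectProduct.inl ε) = fEps m ε := by
  rw [ρ3_apply, SemidirectProduct.left_inl, SemidirectProduct.right_inl, map_one, mul_one]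

lemma ρ3_inr (σ : Equiv.Perm (Fin 3)) :
    ρ3 m (SemidirectProduct.inr σ) = fSig m σ := by
  rw [ρ3_apply, SemidirectProduct.left_inr, SemidirectProduct.right_inr, map_one, one_mul]

lemma snoc0 (δ : Fin 2 → ZMod 2) : (Fin.snoc δ 0 : Fin 3 → ZMod 2) 0 = δ 0 := rfl
lemma snoc1 (δ : Fin 2 → ZMod 2) : (Fin.snoc δ 0 : Fin 3 → ZMod 2) 1 = δ 1 := rfl
lemma snoc2 (δ : Fin 2 → ZMod 2) : (Fin.snoc δ 0 : Fin 3 → ZMod 2) 2 = 0 := rfl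

lemma comm_inl (δ' : Fin 2 → ZMod 2) :
    (Φ m) ∘ₗ (ρ3 m (ιB 2 (SemidirectProduct.inl (Multiplicative.ofAdd δ'))))
      = ((RF m)
          (SemidirectProduct.inl (Multiplicative.ofAdd δ'))) ∘ₗ (Φ m) := by
  rw [iota_inl, ρ3_inl]
  refine Finsupp.lhom_ext fun b x => ?_
  show Φ m (opOf m (epsMove m (Fin.snoc δ' 0)) (epsSign m (Fin.snoc δ' 0)) (single b x))
      = (RF m) _ (Φ m (single b x))
  rw [opOf_single, map_smul, Φ_single, Φ_single, map_smul]
  have hP : ∀ (c : FixT m) (k : KT m) (s : ZMod 2),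
      (SemidirectProduct.inl (Multiplicative.ofAdd δ') : B 2) • Pax m c k s
        = Pax m c k (s + δ' 0) := fun c k s => inl_smul_Pax m _ c k s
  have hQ : ∀ (c : FixT m) (k : KT m) (s : ZMod 2),
      (SemidirectProduct.inl (Multiplicative.ofAdd δ') : B 2) • Qax m c k s
        = Qax m c k (s + δ' 1) := fun c k s => inl_smul_Qax m _ c k s
  rcases b with ⟨c, d⟩ | (⟨⟨u, v⟩, ⟨s, s'⟩⟩ | ⟨⟨c, k⟩, j | w⟩)
  · rw [show epsMove m (Fin.snoc δ' 0) (Sum.inl (c, d)) = Sum.inl (c, d) from rfl,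
      show epsSign m (Fin.snoc δ' 0) (Sum.inl (c, d)) = 1 from rfl, one_smul]
    rw [show vec m (Sum.inl (c, d))
        = single (pt m (emb m (Sum.inl c)) (emb m (Sum.inl d))) 1 from rfl]
    rw [RF_single, inl_smul_pt, negpow_fix, negpow_fix]
  · rw [show epsMove m (Fin.snoc δ' 0) (Sum.inr (Sum.inl ((u, v), (s, s'))))
        = Sum.inr (Sum.inl ((u, v), (s + δ' 0 + 0, s' + δ' 1 + 0))) from rfl,
      show epsSign m (Fin.snoc δ' 0) (Sum.inr (Sum.inl ((u, v), (s, s')))) = 1 from rfl,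
      one_smul, add_zero, add_zero]
    rw [show vec m (Sum.inr (Sum.inl ((u, v), (s + δ' 0, s' + δ' 1))))
        = single (pt m (emb m (Sum.inr (u, s + δ' 0))) (emb m (Sum.inr (v, s' + δ' 1)))) 1
        from rfl]
    rw [show vec m (Sum.inr (Sum.inl ((u, v), (s, s'))))
        = single (pt m (emb m (Sum.inr (u, s))) (emb m (Sum.inr (v, s')))) 1 from rfl]
    rw [RF_single, inl_smul_pt, negpow_free, negpow_free]
    rfl
  · have hmove : ∀ jj : Fin 3 ⊕ Unit,
        epsMove m (Fin.snoc δ' 0) (Sum.inr (Sum.inr ((c, k), jj)))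
          = Sum.inr (Sum.inr ((c, k), jj)) := fun jj => rfl
    revert j
    refine fin3_cases ?_ ?_ ?_
    · rw [hmove, show epsSign m (Fin.snoc δ' 0) (Sum.inr (Sum.inr ((c, k), Sum.inl 0)))
          = (-1 : ℂ) ^ (δ' 0).val from rfl]
      rw [show (Sum.inr (Sum.inr ((c, k), Sum.inl 0)) : YB m) = bF m c k 0 from rfl, vec_bF0]
      simp only [map_sub]
      rw [RF_single, RF_single, hP, hP]
      rcases zmod2_cases (δ' 0) with h | h <;> rw [h] <;>
        simp only [show ((0 : ZMod 2)).val = 0 from rfl, show ((1 : ZMod 2)).val = 1 from rfl,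
          pow_zero, pow_one, add_zero, show ((0 : ZMod 2) + 1 : ZMod 2) = 1 from rfl,
          show ((1 : ZMod 2) + 1 : ZMod 2) = 0 from rfl] <;>
        match_scalars <;> ring
    · rw [hmove, show epsSign m (Fin.snoc δ' 0) (Sum.inr (Sum.inr ((c, k), Sum.inl 1)))
          = (-1 : ℂ) ^ (δ' 1).val from rfl]
      rw [show (Sum.inr (Sum.inr ((c, k), Sum.inl 1)) : YB m) = bF m c k 1 from rfl, vec_bF1]
      simp only [map_sub]
      rw [RF_single, RF_single, hQ, hQ]
      rcases zmod2_cases (δ' 1) with h | h <;> rw [h] <;>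
        simp only [show ((0 : ZMod 2)).val = 0 from rfl, show ((1 : ZMod 2)).val = 1 from rfl,
          pow_zero, pow_one, add_zero, show ((0 : ZMod 2) + 1 : ZMod 2) = 1 from rfl,
          show ((1 : ZMod 2) + 1 : ZMod 2) = 0 from rfl] <;>
        match_scalars <;> ring
    · rw [hmove, show epsSign m (Fin.snoc δ' 0) (Sum.inr (Sum.inr ((c, k), Sum.inl 2)))
          = (-1 : ℂ) ^ ((0 : ZMod 2)).val from rfl]
      rw [show (Sum.inr (Sum.inr ((c, k), Sum.inl 2)) : YB m) = bF m c k 2 from rfl, vec_bF2]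
      simp only [map_smul, map_add]
      rw [RF_single, RF_single,
        RF_single, RF_single, hP, hP, hQ, hQ]
      rcases zmod2_cases (δ' 0) with h | h <;> rw [h] <;>
        rcases zmod2_cases (δ' 1) with h' | h' <;> rw [h'] <;>
        simp only [show ((0 : ZMod 2)).val = 0 from rfl, pow_zero, add_zero,
          show ((0 : ZMod 2) + 1 : ZMod 2) = 1 from rfl,
          show ((1 : ZMod 2) + 1 : ZMod 2) = 0 from rfl] <;>
        match_scalars <;> ring
  · rw [show epsMove m (Fin.snoc δ' 0) (Sum.inr (Sum.inr ((c, k), Sum.inr w)))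
        = Sum.inr (Sum.inr ((c, k), Sum.inr w)) from rfl,
      show epsSign m (Fin.snoc δ' 0) (Sum.inr (Sum.inr ((c, k), Sum.inr w))) = 1 from rfl,
      one_smul]
    rw [show (Sum.inr (Sum.inr ((c, k), Sum.inr w)) : YB m) = bZ m c k from rfl, vec_bZ]
    simp only [map_smul, map_sub, map_add]
    rw [RF_single, RF_single,
      RF_single, RF_single, hP, hP, hQ, hQ]
    rcases zmod2_cases (δ' 0) with h | h <;> rw [h] <;>
      rcases zmod2_cases (δ' 1) with h' | h' <;> rw [h'] <;>
      simp only [add_zero, show ((0 : ZMod 2) + 1 : ZMod 2) = 1 from rfl,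
        show ((1 : ZMod 2) + 1 : ZMod 2) = 0 from rfl] <;>
      match_scalars <;> ring

end NTwoE
section NTwoF

open Equiv Finsupp Multiplicative

variable (m : ℕ) [NeZero m]

lemma perm2_cases : ∀ π : Equiv.Perm (Fin 2), π = 1 ∨ π = Equiv.swap 0 1 := by decide

lemma ext_swap : extendPerm 2 (Equiv.swap 0 1) = Equiv.swap 0 1 := by decide

lemma sign_swap3 : Equiv.Perm.sign (Equiv.swap (0 : Fin 3) 1) = -1 := by decide

lemma swS_neg {α : Type*} (p : α × α) : swS (-1) p = (p.2, p.1) := by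
  simp [swS]

lemma aMap_swap : ∀ s s' : ZMod 2, aMap (Equiv.swap (0 : Fin 3) 1) s s' = (s', s) := by decide

lemma swap3_0 : (Equiv.swap (0 : Fin 3) 1) 0 = 1 := by decide
lemma swap3_1 : (Equiv.swap (0 : Fin 3) 1) 1 = 0 := by decide
lemma swap3_2 : (Equiv.swap (0 : Fin 3) 1) 2 = 2 := by decide

lemma comm_swap :
    (Φ m) ∘ₗ (ρ3 m (ιB 2 (SemidirectProduct.inr (Equiv.swap 0 1))))
      = ((RF m)
          (SemidirectProduct.inr (Equiv.swap 0 1))) ∘ₗ (Φ m) := by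
  rw [iota_inr, ext_swap, ρ3_inr]
  refine Finsupp.lhom_ext fun b x => ?_
  show Φ m (opOf m (sigMove m (Equiv.swap 0 1)) (sigSign m (Equiv.swap 0 1)) (single b x))
      = (RF m) _ (Φ m (single b x))
  rw [opOf_single, map_smul, Φ_single, Φ_single, map_smul]
  rcases b with ⟨c, d⟩ | (⟨⟨u, v⟩, ⟨s, s'⟩⟩ | ⟨⟨c, k⟩, j | w⟩)
  · rw [show sigMove m (Equiv.swap 0 1) (Sum.inl (c, d))
        = Sum.inl (swS (Equiv.Perm.sign (Equiv.swap (0 : Fin 3) 1)) (c, d)) from rfl,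
      sign_swap3, swS_neg,
      show sigSign m (Equiv.swap 0 1) (Sum.inl (c, d)) = 1 from rfl, one_smul]
    rw [show vec m (Sum.inl ((c, d).2, (c, d).1))
        = single (pt m (emb m (Sum.inl d)) (emb m (Sum.inl c))) 1 from rfl]
    rw [show vec m (Sum.inl (c, d))
        = single (pt m (emb m (Sum.inl c)) (emb m (Sum.inl d))) 1 from rfl]
    rw [RF_single, inr_swap_smul_pt]
  · rw [show sigMove m (Equiv.swap 0 1) (Sum.inr (Sum.inl ((u, v), (s, s'))))
        = Sum.inr (Sum.inl (swS (Equiv.Perm.sign (Equiv.swap (0 : Fin 3) 1)) (u, v),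
            aMap (Equiv.swap (0 : Fin 3) 1) s s')) from rfl,
      sign_swap3, swS_neg, aMap_swap,
      show sigSign m (Equiv.swap 0 1) (Sum.inr (Sum.inl ((u, v), (s, s')))) = 1 from rfl,
      one_smul]
    rw [show vec m (Sum.inr (Sum.inl (((u, v).2, (u, v).1), (s', s))))
        = single (pt m (emb m (Sum.inr (v, s'))) (emb m (Sum.inr (u, s)))) 1 from rfl]
    rw [show vec m (Sum.inr (Sum.inl ((u, v), (s, s'))))
        = single (pt m (emb m (Sum.inr (u, s))) (emb m (Sum.inr (v, s')))) 1 from rfl]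
    rw [RF_single, inr_swap_smul_pt]
  · revert j
    refine fin3_cases ?_ ?_ ?_
    · rw [show sigMove m (Equiv.swap 0 1) (Sum.inr (Sum.inr ((c, k), Sum.inl 0)))
          = Sum.inr (Sum.inr ((c, k), Sum.inl ((Equiv.swap (0 : Fin 3) 1) 0))) from rfl,
        swap3_0,
        show sigSign m (Equiv.swap 0 1) (Sum.inr (Sum.inr ((c, k), Sum.inl 0))) = 1 from rfl,
        one_smul]
      rw [show (Sum.inr (Sum.inr ((c, k), Sum.inl 1)) : YB m) = bF m c k 1 from rfl, vec_bF1]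
      rw [show (Sum.inr (Sum.inr ((c, k), Sum.inl 0)) : YB m) = bF m c k 0 from rfl, vec_bF0]
      simp only [map_sub]
      rw [RF_single, RF_single,
        swap_smul_Pax, swap_smul_Pax]
    · rw [show sigMove m (Equiv.swap 0 1) (Sum.inr (Sum.inr ((c, k), Sum.inl 1)))
          = Sum.inr (Sum.inr ((c, k), Sum.inl ((Equiv.swap (0 : Fin 3) 1) 1))) from rfl,
        swap3_1,
        show sigSign m (Equiv.swap 0 1) (Sum.inr (Sum.inr ((c, k), Sum.inl 1))) = 1 from rfl,
        one_smul]
      rw [show (Sum.inr (Sum.inr ((c, k), Sum.inl 0)) : YB m) = bF m c k 0 from rfl, vec_bF0]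
      rw [show (Sum.inr (Sum.inr ((c, k), Sum.inl 1)) : YB m) = bF m c k 1 from rfl, vec_bF1]
      simp only [map_sub]
      rw [RF_single, RF_single,
        swap_smul_Qax, swap_smul_Qax]
    · rw [show sigMove m (Equiv.swap 0 1) (Sum.inr (Sum.inr ((c, k), Sum.inl 2)))
          = Sum.inr (Sum.inr ((c, k), Sum.inl ((Equiv.swap (0 : Fin 3) 1) 2))) from rfl,
        swap3_2,
        show sigSign m (Equiv.swap 0 1) (Sum.inr (Sum.inr ((c, k), Sum.inl 2))) = 1 from rfl,
        one_smul]
      rw [show (Sum.inr (Sum.inr ((c, k), Sum.inl 2)) : YB m) = bF m c k 2 from rfl, vec_bF2]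
      simp only [map_smul, map_add]
      rw [RF_single, RF_single,
        RF_single, RF_single,
        swap_smul_Pax, swap_smul_Pax, swap_smul_Qax, swap_smul_Qax]
      match_scalars <;> ring
  · rw [show sigMove m (Equiv.swap 0 1) (Sum.inr (Sum.inr ((c, k), Sum.inr w)))
        = Sum.inr (Sum.inr ((c, k), Sum.inr w)) from rfl,
      show sigSign m (Equiv.swap 0 1) (Sum.inr (Sum.inr ((c, k), Sum.inr w)))
        = (((Equiv.Perm.sign (Equiv.swap (0 : Fin 3) 1) : ℤˣ) : ℤ) : ℂ) from rfl,
      sign_swap3]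
    rw [show (Sum.inr (Sum.inr ((c, k), Sum.inr w)) : YB m) = bZ m c k from rfl, vec_bZ]
    simp only [map_smul, map_sub, map_add, Units.val_neg, Units.val_one, Int.cast_neg,
      Int.cast_one]
    rw [RF_single, RF_single,
      RF_single, RF_single,
      swap_smul_Pax, swap_smul_Pax, swap_smul_Qax, swap_smul_Qax]
    match_scalars <;> ring

lemma comm_inr (π : Equiv.Perm (Fin 2)) :
    (Φ m) ∘ₗ (ρ3 m (ιB 2 (SemidirectProduct.inr π)))
      = ((RF m)
          (SemidirectProduct.inr π)) ∘ₗ (Φ m) := by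
  rcases perm2_cases π with h | h <;> subst h
  · rw [show (SemidirectProduct.inr (1 : Equiv.Perm (Fin 2)) : B 2) = 1 from map_one _,
      map_one, map_one, map_one]
    ext v
    simp
  · exact comm_swap m

lemma comm_all (g : B 2) :
    (Φ m) ∘ₗ (ρ3 m (ιB 2 g))
      = ((RF m) g) ∘ₗ (Φ m) := by
  have e1 : ρ3 m (ιB 2 g)
      = ρ3 m (ιB 2 (SemidirectProduct.inl g.left))
          ∘ₗ ρ3 m (ιB 2 (SemidirectProduct.inr g.right)) := by
    rw [← Module.End.mul_eq_comp, ← map_mul, ← map_mul,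
      SemidirectProduct.inl_left_mul_inr_right]
  have e2 : (RF m) g
      = (RF m) (SemidirectProduct.inl g.left)
          ∘ₗ (RF m)
            (SemidirectProduct.inr g.right) := by
    rw [← Module.End.mul_eq_comp, ← map_mul, SemidirectProduct.inl_left_mul_inr_right]
  have hl : (Φ m) ∘ₗ (ρ3 m (ιB 2 (SemidirectProduct.inl g.left)))
      = ((RF m)
          (SemidirectProduct.inl g.left)) ∘ₗ (Φ m) := by
    have := comm_inl m (Multiplicative.toAdd g.left)
    exact this
  rw [e1, e2, ← LinearMap.comp_assoc, hl, LinearMap.comp_assoc, comm_inr,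
    ← LinearMap.comp_assoc]

instance : Finite (FixT m) := inferInstanceAs (Finite {a : ZMod m // a = -a})
instance : Finite (KT m) := inferInstanceAs (Finite {a : ZMod m // a.val < (-a).val})
instance : Finite (YB m) := inferInstanceAs (Finite ((FixT m × FixT m) ⊕
  ((KT m × KT m) × (ZMod 2 × ZMod 2)) ⊕ ((FixT m × KT m) × (Fin 3 ⊕ Unit))))

end NTwoF

open CategoryTheory in
lemma nTwoCase (m : ℕ) (hm : 1 ≤ m) :
    ∃ V : Rep ℂ (B 3), FiniteDimensional ℂ V.V ∧
      Nonempty (Rep.res (ιB 2) V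
        ≅ Rep.ofMulAction ℂ (B 2) (Fin 2 → ZMod m)) := by
  haveI : NeZero m := ⟨by omega⟩
  refine ⟨Rep.of (ρ3 m), ?_, ?_⟩
  · show FiniteDimensional ℂ (YB m →₀ ℂ)
    infer_instance
  · refine ⟨Rep.mkIso (Representation.Equiv.mk ((LinearEquiv.ofLinear (Φ m) (Ψ m) (ΦΨ m)
      (ΨΦ m) : (YB m →₀ ℂ) ≃ₗ[ℂ] ((Fin 2 → ZMod m) →₀ ℂ)).trans (MonoidAlgebra.coeffLinearEquiv ℂ).symm) ?_)⟩
    intro g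
    refine LinearMap.ext fun v => ?_
    have h := LinearMap.congr_fun (comm_all m g) v
    show (MonoidAlgebra.coeffLinearEquiv ℂ).symm (Φ m (ρ3 m (ιB 2 g) v)) = _
    rw [LinearMap.comp_apply] at h
    rw [h, Representation.ofMulAction_def]
    simp [RF]

/-- **Theorem (n ≤ 2).** For `n = 1` or `n = 2` and every `m ≥ 1`, there is a
finite-dimensional representation `V` of `B (n+1)` over `ℂ` whose restriction
along `ιB n : B n →* B (n+1)` is isomorphic, as a representation of `B n`, to
the linearization `ℂ[(ℤ/mℤ)^n]`. -/
theorem exists_extension_n_le_two (n : ℕ) (hn : n = 1 ∨ n = 2) (m : ℕ) (hm : 1 ≤ m) :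
    ∃ V : Rep ℂ (B (n + 1)), FiniteDimensional ℂ V.V ∧
      Nonempty (Rep.res (ιB n) V
        ≅ Rep.ofMulAction ℂ (B n) (Fin n → ZMod m)) := by
  rcases hn with h | h <;> subst h
  · exact nOneCase m hm
  · exact nTwoCase m hm
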